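/- arXiv:1706.00187 — 2 statements merged into one kernel-verified Lean document; each statement's English description precedes it below -/
import Mathlib

section
/- There exists a unique bounded function f = (f₀, f₁) : ℝ → ℝ² satisfying the dilation equation f(t) = (1/3)(S₀ f(2t) + S₁ f(2t-1)) for all t ∈ ℝ, together with the boundary conditions f₀(t) = f₁(t) = 0 for t ≤ 0 and f₀(t) = f₁(t) = 1/2 for t ≥ 1, where S₀ is the 2×2 matrix with rows (1,0),(1,1) and S₁ has rows (1,1),(0,1). Moreover, this f satisfies f(1/2) = (1/6, 1/3)ᵀ, and f₀ is Hölder continuous with exponent log₂(3/τ), where τ = (1+√5)/2 is the golden ratio. -/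
open Filter Topology Real
open scoped NNReal

noncomputable section

set_option maxHeartbeats 1000000

/-- The matrix S₀ with rows (1,0),(1,1). -/
def dilS0 : Matrix (Fin 2) (Fin 2) ℝ := !![1, 0; 1, 1]

/-- The matrix S₁ with rows (1,1),(0,1). -/
def dilS1 : Matrix (Fin 2) (Fin 2) ℝ := !![1, 1; 0, 1]

/-- `f = (f₀, f₁) : ℝ → ℝ²` solves the dilation equation
`f(t) = (1/3)(S₀ f(2t) + S₁ f(2t-1))` with the boundary conditions
`f ≡ 0` on `(-∞, 0]` and `f ≡ (1/2, 1/2)ᵀ` on `[1, ∞)`. -/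
def IsDilationSolution (f : ℝ → Fin 2 → ℝ) : Prop :=
  (∀ t : ℝ, f t = (1 / 3 : ℝ) •
      (dilS0.mulVec (f (2 * t)) + dilS1.mulVec (f (2 * t - 1)))) ∧
  (∀ t : ℝ, t ≤ 0 → f t = 0) ∧
  (∀ t : ℝ, 1 ≤ t → f t = fun _ => 1 / 2)

lemma key_estimate {g : ℝ → Fin 2 → ℝ} {C : ℝ}
    (hb : ∀ t i, |g t i| ≤ C)
    (heq0 : ∀ t : ℝ, g t 0 = 1/3*(g (2*t) 0 + (g (2*t-1) 0 + g (2*t-1) 1)))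
    (heq1 : ∀ t : ℝ, g t 1 = 1/3*((g (2*t) 0 + g (2*t) 1) + g (2*t-1) 1))
    (h0 : ∀ t : ℝ, t ≤ 0 → ∀ i, g t i = 0)
    (h1 : ∀ t : ℝ, (1:ℝ) ≤ t → ∀ i, g t i = 1/2) :
    ∀ n : ℕ, ∀ k : ℕ, k + 1 ≤ 2^n →
    ∀ t s : ℝ, (k:ℝ)/2^n ≤ t → t ≤ ((k:ℝ)+1)/2^n → (k:ℝ)/2^n ≤ s → s ≤ ((k:ℝ)+1)/2^n →
    ∀ a b : ℝ, 0 ≤ a → 0 ≤ b →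
    |a * (g t 0 - g s 0) + b * (g t 1 - g s 1)| ≤
      (goldenRatio/3)^n * max (a + (goldenRatio-1)*b) (b + (goldenRatio-1)*a) *
        (2*C*goldenRatio) := by
  have hτ1 : 1 < goldenRatio := one_lt_goldenRatio
  have hτ2 : goldenRatio < 2 := goldenRatio_lt_two
  have hsq : goldenRatio^2 = goldenRatio + 1 := goldenRatio_sq
  have hC : 0 ≤ C := le_trans (abs_nonneg _) (hb 0 0)
  intro n
  induction n with
  | zero =>
    intro k hk t s ht1 ht2 hs1 hs2 a b ha hb'
    have hM1 : goldenRatio*(a + (goldenRatio-1)*b) ≤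
        goldenRatio*(max (a + (goldenRatio-1)*b) (b + (goldenRatio-1)*a)) :=
      mul_le_mul_of_nonneg_left (le_max_left _ _) (by linarith)
    have d0 : |g t 0 - g s 0| ≤ 2*C := by
      calc |g t 0 - g s 0| ≤ |g t 0| + |g s 0| := abs_sub _ _
        _ ≤ 2*C := by have := hb t 0; have := hb s 0; linarith
    have d1 : |g t 1 - g s 1| ≤ 2*C := by
      calc |g t 1 - g s 1| ≤ |g t 1| + |g s 1| := abs_sub _ _
        _ ≤ 2*C := by have := hb t 1; have := hb s 1; linarith
    have habs : |a * (g t 0 - g s 0) + b * (g t 1 - g s 1)| ≤ (a+b)*(2*C) := by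
      calc |a * (g t 0 - g s 0) + b * (g t 1 - g s 1)|
          ≤ |a * (g t 0 - g s 0)| + |b * (g t 1 - g s 1)| := abs_add_le _ _
        _ = a * |g t 0 - g s 0| + b * |g t 1 - g s 1| := by
            rw [abs_mul, abs_mul, abs_of_nonneg ha, abs_of_nonneg hb']
        _ ≤ a*(2*C) + b*(2*C) :=
            add_le_add (mul_le_mul_of_nonneg_left d0 ha) (mul_le_mul_of_nonneg_left d1 hb')
        _ = (a+b)*(2*C) := by ring
    have hab : a + b ≤ goldenRatio * (max (a + (goldenRatio-1)*b) (b + (goldenRatio-1)*a)) := by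
      nlinarith [hM1, hsq, mul_nonneg (by linarith : (0:ℝ) ≤ goldenRatio - 1) ha]
    rw [pow_zero, one_mul]
    calc |a * (g t 0 - g s 0) + b * (g t 1 - g s 1)| ≤ (a+b)*(2*C) := habs
      _ ≤ (goldenRatio * (max (a + (goldenRatio-1)*b) (b + (goldenRatio-1)*a)))*(2*C) :=
          mul_le_mul_of_nonneg_right hab (by linarith)
      _ = max (a + (goldenRatio-1)*b) (b + (goldenRatio-1)*a) * (2*C*goldenRatio) := by ring
  | succ n ih =>
    intro k hk t s ht1 ht2 hs1 hs2 a b ha hb'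
    have hp : (0:ℝ) < 2^n := by positivity
    have hp' : (0:ℝ) < 2^n*2 := by positivity
    rw [pow_succ] at ht1 ht2 hs1 hs2
    have ht1' : (k:ℝ)/2^n ≤ 2*t := by
      rw [div_le_iff₀ hp]; rw [div_le_iff₀ hp'] at ht1; nlinarith
    have ht2' : 2*t ≤ ((k:ℝ)+1)/2^n := by
      rw [le_div_iff₀ hp]; rw [le_div_iff₀ hp'] at ht2; nlinarith
    have hs1' : (k:ℝ)/2^n ≤ 2*s := by
      rw [div_le_iff₀ hp]; rw [div_le_iff₀ hp'] at hs1; nlinarith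
    have hs2' : 2*s ≤ ((k:ℝ)+1)/2^n := by
      rw [le_div_iff₀ hp]; rw [le_div_iff₀ hp'] at hs2; nlinarith
    have hpow : (0:ℝ) ≤ (goldenRatio/3)^n := by positivity
    have hK : (0:ℝ) ≤ 2*C*goldenRatio := by nlinarith
    rcases le_or_gt (k+1) (2^n) with hA | hB
    · -- left half
      have hkr : ((k:ℝ)+1) ≤ 2^n := by exact_mod_cast hA
      have hhalf : 2*t - 1 ≤ 0 := by
        have : ((k:ℝ)+1)/2^n ≤ 1 := by rw [div_le_one hp]; linarith
        linarith
      have hhalfs : 2*s - 1 ≤ 0 := by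
        have : ((k:ℝ)+1)/2^n ≤ 1 := by rw [div_le_one hp]; linarith
        linarith
      have e1 : ∀ i, g (2*t-1) i = 0 := h0 _ hhalf
      have e2 : ∀ i, g (2*s-1) i = 0 := h0 _ hhalfs
      have hre : a * (g t 0 - g s 0) + b * (g t 1 - g s 1) =
          1/3*((a+b) * (g (2*t) 0 - g (2*s) 0) + b * (g (2*t) 1 - g (2*s) 1)) := by
        rw [heq0 t, heq1 t, heq0 s, heq1 s, e1 0, e1 1, e2 0, e2 1]; ring
      have hIH := ih k hA (2*t) (2*s) ht1' ht2' hs1' hs2' (a+b) b (by linarith) hb'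
      have hMr : goldenRatio*(b + (goldenRatio-1)*a) ≤ goldenRatio*(max (a + (goldenRatio-1)*b) (b + (goldenRatio-1)*a)) :=
        mul_le_mul_of_nonneg_left (le_max_right _ _) (by linarith)
      have hφ : max ((a+b) + (goldenRatio-1)*b) (b + (goldenRatio-1)*(a+b)) ≤
          goldenRatio * (max (a + (goldenRatio-1)*b) (b + (goldenRatio-1)*a)) := by
        apply max_le
        · nlinarith
        · nlinarith
      calc |a * (g t 0 - g s 0) + b * (g t 1 - g s 1)|
          = 1/3 * |(a+b) * (g (2*t) 0 - g (2*s) 0) + b * (g (2*t) 1 - g (2*s) 1)| := by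
            rw [hre, abs_mul]; norm_num
        _ ≤ 1/3 * ((goldenRatio/3)^n *
              max ((a+b) + (goldenRatio-1)*b) (b + (goldenRatio-1)*(a+b)) *
              (2*C*goldenRatio)) := by linarith
        _ ≤ 1/3 * ((goldenRatio/3)^n * (goldenRatio*(max (a + (goldenRatio-1)*b) (b + (goldenRatio-1)*a))) * (2*C*goldenRatio)) := by
            nlinarith [mul_le_mul_of_nonneg_right (mul_le_mul_of_nonneg_left hφ hpow) hK]
        _ = (goldenRatio/3)^(n+1) * max (a + (goldenRatio-1)*b) (b + (goldenRatio-1)*a) * (2*C*goldenRatio) := by rw [pow_succ]; ring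
    · -- right half
      have h2n : 2^n ≤ k := by omega
      have hk' : (k - 2^n) + 1 ≤ 2^n := by
        have h2 : (2:ℕ)^(n+1) = 2^n*2 := pow_succ 2 n
        omega
      have hcast : ((k - 2^n : ℕ) : ℝ) = (k:ℝ) - 2^n := by
        rw [Nat.cast_sub h2n]; push_cast; ring
      have hkr : (2:ℝ)^n ≤ (k:ℝ) := by exact_mod_cast h2n
      have hone : (1:ℝ) ≤ 2*t := by
        have : (1:ℝ) ≤ (k:ℝ)/2^n := by rw [le_div_iff₀ hp]; linarith
        linarith
      have hones : (1:ℝ) ≤ 2*s := by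
        have : (1:ℝ) ≤ (k:ℝ)/2^n := by rw [le_div_iff₀ hp]; linarith
        linarith
      have e1 : ∀ i, g (2*t) i = 1/2 := h1 _ hone
      have e2 : ∀ i, g (2*s) i = 1/2 := h1 _ hones
      have hre : a * (g t 0 - g s 0) + b * (g t 1 - g s 1) =
          1/3*(a * (g (2*t-1) 0 - g (2*s-1) 0) + (a+b) * (g (2*t-1) 1 - g (2*s-1) 1)) := by
        rw [heq0 t, heq1 t, heq0 s, heq1 s, e1 0, e1 1, e2 0, e2 1]; ring
      have ht1'' : ((k - 2^n : ℕ):ℝ)/2^n ≤ 2*t-1 := by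
        rw [hcast, div_le_iff₀ hp]; rw [div_le_iff₀ hp] at ht1'; nlinarith
      have ht2'' : 2*t-1 ≤ (((k - 2^n : ℕ):ℝ)+1)/2^n := by
        rw [hcast, le_div_iff₀ hp]; rw [le_div_iff₀ hp] at ht2'; nlinarith
      have hs1'' : ((k - 2^n : ℕ):ℝ)/2^n ≤ 2*s-1 := by
        rw [hcast, div_le_iff₀ hp]; rw [div_le_iff₀ hp] at hs1'; nlinarith
      have hs2'' : 2*s-1 ≤ (((k - 2^n : ℕ):ℝ)+1)/2^n := by
        rw [hcast, le_div_iff₀ hp]; rw [le_div_iff₀ hp] at hs2'; nlinarith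
      have hIH := ih (k - 2^n) hk' (2*t-1) (2*s-1) ht1'' ht2'' hs1'' hs2''
        a (a+b) ha (by linarith)
      have hMl : goldenRatio*(a + (goldenRatio-1)*b) ≤ goldenRatio*(max (a + (goldenRatio-1)*b) (b + (goldenRatio-1)*a)) :=
        mul_le_mul_of_nonneg_left (le_max_left _ _) (by linarith)
      have hφ : max (a + (goldenRatio-1)*(a+b)) ((a+b) + (goldenRatio-1)*a) ≤
          goldenRatio * (max (a + (goldenRatio-1)*b) (b + (goldenRatio-1)*a)) := by
        apply max_le
        · nlinarith
        · nlinarith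
      calc |a * (g t 0 - g s 0) + b * (g t 1 - g s 1)|
          = 1/3 * |a * (g (2*t-1) 0 - g (2*s-1) 0) + (a+b) * (g (2*t-1) 1 - g (2*s-1) 1)| := by
            rw [hre, abs_mul]; norm_num
        _ ≤ 1/3 * ((goldenRatio/3)^n *
              max (a + (goldenRatio-1)*(a+b)) ((a+b) + (goldenRatio-1)*a) *
              (2*C*goldenRatio)) := by linarith
        _ ≤ 1/3 * ((goldenRatio/3)^n * (goldenRatio*(max (a + (goldenRatio-1)*b) (b + (goldenRatio-1)*a))) * (2*C*goldenRatio)) := by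
            nlinarith [mul_le_mul_of_nonneg_right (mul_le_mul_of_nonneg_left hφ hpow) hK]
        _ = (goldenRatio/3)^(n+1) * max (a + (goldenRatio-1)*b) (b + (goldenRatio-1)*a) * (2*C*goldenRatio) := by rw [pow_succ]; ring


lemma clamp_lip (x y : ℝ) : |max 0 (min x 1) - max 0 (min y 1)| ≤ |x - y| := by
  have h1 := le_abs_self (x - y)
  have h2 := neg_abs_le (x - y)
  rw [abs_sub_le_iff]
  constructor <;>
  · simp only [min_def, max_def]
    split_ifs <;> linarith

section HolderCore
variable {g : ℝ → Fin 2 → ℝ} {C : ℝ}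


lemma dyadic_osc
    (hosc : ∀ n : ℕ, ∀ k : ℕ, k + 1 ≤ 2^n →
      ∀ t s : ℝ, (k:ℝ)/2^n ≤ t → t ≤ ((k:ℝ)+1)/2^n → (k:ℝ)/2^n ≤ s → s ≤ ((k:ℝ)+1)/2^n →
      |g t 0 - g s 0| ≤ (goldenRatio/3)^n * (2*C*goldenRatio))
    (hC : 0 ≤ C)
    (h0 : ∀ t : ℝ, t ≤ 0 → ∀ i, g t i = 0)
    (h1 : ∀ t : ℝ, (1:ℝ) ≤ t → ∀ i, g t i = 1/2) :
    ∀ x y : ℝ, |g x 0 - g y 0| ≤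
      (12*C*goldenRatio) * |x - y| ^ (logb 2 (3/goldenRatio)) := by
  have hτ1 : 1 < goldenRatio := one_lt_goldenRatio
  have hτ2 : goldenRatio < 2 := goldenRatio_lt_two
  have hsq : goldenRatio^2 = goldenRatio + 1 := goldenRatio_sq
  set α := logb 2 (3/goldenRatio) with hα_def
  have hα : 0 < α := Real.logb_pos (by norm_num)
    (by rw [lt_div_iff₀ goldenRatio_pos]; linarith)
  have h2α : (2:ℝ) ^ α = 3/goldenRatio :=
    Real.rpow_logb (by norm_num) (by norm_num) (by positivity)
  -- core estimate on [0,1] for ordered pairs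
  have core : ∀ x y : ℝ, 0 ≤ x → y ≤ 1 → x ≤ y →
      |g x 0 - g y 0| ≤ (12*C*goldenRatio) * (y - x) ^ α := by
    intro x y hx0 hy1 hxy
    rcases eq_or_lt_of_le hxy with rfl | hlt
    · simp only [sub_self, abs_zero]
      rw [Real.zero_rpow hα.ne', mul_zero]
    · set d := y - x with hd_def
      have hd0 : 0 < d := by simp only [hd_def]; linarith
      have hd1 : d ≤ 1 := by simp only [hd_def]; linarith
      have hex : ∃ m : ℕ, (1:ℝ)/2^(m+1) < d := by
        obtain ⟨m, hm⟩ := pow_unbounded_of_one_lt (1/d) (show (1:ℝ) < 2 by norm_num)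
        refine ⟨m, ?_⟩
        rw [div_lt_iff₀ (by positivity)]
        rw [div_lt_iff₀ hd0] at hm
        have h2m : (2:ℝ)^m ≤ 2^(m+1) := by
          rw [pow_succ]; nlinarith [pow_pos (show (0:ℝ) < 2 by norm_num) m]
        nlinarith
      obtain ⟨n, hn, hup⟩ : ∃ n : ℕ, (1:ℝ)/2^(n+1) < d ∧ d ≤ 1/2^n := by
        refine ⟨Nat.find hex, Nat.find_spec hex, ?_⟩
        rcases Nat.eq_zero_or_pos (Nat.find hex) with h | h
        · rw [h]; simpa using hd1
        · obtain ⟨m, hm⟩ : ∃ m, Nat.find hex = m + 1 :=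
            ⟨Nat.find hex - 1, by omega⟩
          rw [hm]
          have := Nat.find_min hex (by omega : m < Nat.find hex)
          push_neg at this
          exact this
      have hp : (0:ℝ) < 2^n := by positivity
      set k := ⌊2^n * x⌋₊ with hk_def
      have hk1 : (k:ℝ) ≤ 2^n*x := Nat.floor_le (by positivity)
      have hk2 : 2^n*x < (k:ℝ)+1 := by
        have := Nat.lt_floor_add_one (2^n * x); push_cast at this ⊢; linarith
      have hx1 : x < 1 := lt_of_lt_of_le hlt hy1
      have hkn : k + 1 ≤ 2^n := by
        have hcast : (k:ℝ) < ((2^n : ℕ):ℝ) := by push_cast; nlinarith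
        have := Nat.cast_lt.mp hcast
        omega
      have hxl : (k:ℝ)/2^n ≤ x := by rw [div_le_iff₀ hp]; linarith
      have hxu : x ≤ ((k:ℝ)+1)/2^n := by rw [le_div_iff₀ hp]; nlinarith
      have hdn : d*2^n ≤ 1 := by
        rw [le_div_iff₀ hp] at hup; linarith
      have hyu : y ≤ ((k:ℝ)+2)/2^n := by
        rw [le_div_iff₀ hp]
        have hyxd : y = x + d := by rw [hd_def]; ring
        nlinarith
      have hE : |g x 0 - g y 0| ≤ 2*((goldenRatio/3)^n * (2*C*goldenRatio)) := by
        rcases le_or_gt y (((k:ℝ)+1)/2^n) with hy' | hy'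
        · have h := hosc n k hkn x y hxl hxu (le_trans hxl hxy) hy'
          have hpos : (0:ℝ) ≤ (goldenRatio/3)^n * (2*C*goldenRatio) := by positivity
          linarith
        · have hk2n : k + 1 + 1 ≤ 2^n := by
            have h1' : ((k:ℝ)+1)/2^n < 1 := lt_of_lt_of_le hy' hy1
            rw [div_lt_one hp] at h1'
            have : ((k:ℕ):ℝ) + 1 < ((2^n : ℕ):ℝ) := by push_cast; linarith
            have := Nat.cast_lt.mp (by push_cast at this ⊢; linarith :
              ((k+1 : ℕ):ℝ) < ((2^n : ℕ):ℝ))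
            omega
          have hosc1 := hosc n k hkn x (((k:ℝ)+1)/2^n) hxl hxu
            (by rw [div_le_div_iff₀ hp hp]; nlinarith) le_rfl
          have hosc2 := hosc n (k+1) hk2n (((k:ℝ)+1)/2^n) y
            (by push_cast; exact le_rfl)
            (by push_cast; rw [div_le_div_iff₀ hp hp]; nlinarith)
            (by push_cast; exact le_of_lt hy')
            (by push_cast
                have := hyu
                rw [show ((k:ℝ)+1+1) = (k:ℝ)+2 by ring]
                linarith)
          calc |g x 0 - g y 0| ≤ |g x 0 - g (((k:ℝ)+1)/2^n) 0| +
                |g (((k:ℝ)+1)/2^n) 0 - g y 0| := abs_sub_le _ _ _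
            _ ≤ 2*((goldenRatio/3)^n * (2*C*goldenRatio)) := by linarith
      -- convert to rpow bound
      have h2a : ((1/2:ℝ)) ^ α = goldenRatio/3 := by
        rw [show (1/2:ℝ) = 2⁻¹ by norm_num, ← Real.rpow_neg_one (2:ℝ),
          ← Real.rpow_mul (by norm_num : (0:ℝ) ≤ 2)]
        rw [show (-1)*α = α*(-1) by ring, Real.rpow_mul (by norm_num : (0:ℝ) ≤ 2), h2α,
          Real.rpow_neg_one, inv_div]
      have hcalc : ((1:ℝ)/2^(n+1)) ^ α = (goldenRatio/3)^(n+1) := by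
        rw [show (1:ℝ)/2^(n+1) = (1/2:ℝ)^(n+1) by rw [div_pow, one_pow],
          ← Real.rpow_natCast (1/2:ℝ) (n+1), ← Real.rpow_mul (by norm_num : (0:ℝ) ≤ 1/2),
          mul_comm ((n+1 : ℕ):ℝ) α,
          Real.rpow_mul (by norm_num : (0:ℝ) ≤ 1/2), h2a, Real.rpow_natCast]
      have hle : ((1:ℝ)/2^(n+1)) ^ α ≤ d ^ α :=
        Real.rpow_le_rpow (by positivity) (le_of_lt hn) hα.le
      have hdα : (goldenRatio/3)^(n+1) ≤ d ^ α := hcalc ▸ hle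
      have hKp : (0:ℝ) ≤ 12*C*goldenRatio := by nlinarith
      have hpw : (0:ℝ) ≤ (goldenRatio/3)^n := by positivity
      have hfin : 2*((goldenRatio/3)^n * (2*C*goldenRatio)) ≤
          (12*C*goldenRatio) * (goldenRatio/3)^(n+1) := by
        rw [pow_succ]
        nlinarith [mul_nonneg hpw hC, mul_nonneg (mul_nonneg hpw hC) (le_of_lt goldenRatio_pos)]
      calc |g x 0 - g y 0| ≤ 2*((goldenRatio/3)^n * (2*C*goldenRatio)) := hE
        _ ≤ (12*C*goldenRatio) * (goldenRatio/3)^(n+1) := hfin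
        _ ≤ (12*C*goldenRatio) * d ^ α := mul_le_mul_of_nonneg_left hdα hKp
  -- extend to all of ℝ via clamping
  intro x y
  have hgc : ∀ z : ℝ, g z 0 = g (max 0 (min z 1)) 0 := by
    intro z
    rcases le_or_gt z 0 with hz | hz
    · have hmin : min z 1 ≤ 0 := le_trans (min_le_left _ _) hz
      rw [h0 z hz 0, max_eq_left hmin, h0 0 le_rfl 0]
    · rcases le_or_gt 1 z with hz1 | hz1
      · rw [min_eq_right hz1, h1 z hz1 0,
          max_eq_right (by norm_num : (0:ℝ) ≤ 1), h1 1 le_rfl 0]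
      · rw [min_eq_left (le_of_lt hz1), max_eq_right (le_of_lt hz)]
  rw [hgc x, hgc y]
  have hKp : (0:ℝ) ≤ 12*C*goldenRatio := by nlinarith
  have hcx0 : 0 ≤ max 0 (min x 1) := le_max_left _ _
  have hcx1 : max 0 (min x 1) ≤ 1 := max_le (by norm_num) (min_le_right _ _)
  have hcy0 : 0 ≤ max 0 (min y 1) := le_max_left _ _
  have hcy1 : max 0 (min y 1) ≤ 1 := max_le (by norm_num) (min_le_right _ _)
  have hmono : |max 0 (min x 1) - max 0 (min y 1)| ^ α ≤ |x - y| ^ α :=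
    Real.rpow_le_rpow (abs_nonneg _) (clamp_lip x y) hα.le
  rcases le_total (max 0 (min x 1)) (max 0 (min y 1)) with h | h
  · have hcore := core _ _ hcx0 hcy1 h
    have he : max 0 (min y 1) - max 0 (min x 1) = |max 0 (min x 1) - max 0 (min y 1)| := by
      rw [abs_sub_comm, abs_of_nonneg (sub_nonneg.2 h)]
    rw [he] at hcore
    calc |g (max 0 (min x 1)) 0 - g (max 0 (min y 1)) 0|
        ≤ (12*C*goldenRatio) * |max 0 (min x 1) - max 0 (min y 1)| ^ α := hcore
      _ ≤ (12*C*goldenRatio) * |x - y| ^ α := mul_le_mul_of_nonneg_left hmono hKp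
  · have hcore := core _ _ hcy0 hcx1 h
    have he : max 0 (min x 1) - max 0 (min y 1) = |max 0 (min x 1) - max 0 (min y 1)| := by
      rw [abs_of_nonneg (sub_nonneg.2 h)]
    rw [he] at hcore
    rw [abs_sub_comm] at hcore
    calc |g (max 0 (min x 1)) 0 - g (max 0 (min y 1)) 0|
        ≤ (12*C*goldenRatio) * |max 0 (min x 1) - max 0 (min y 1)| ^ α := hcore
      _ ≤ (12*C*goldenRatio) * |x - y| ^ α := mul_le_mul_of_nonneg_left hmono hKp
end HolderCore

lemma vec_eq (v w₀ w₁ : Fin 2 → ℝ) :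
    v = (1/3 : ℝ) • (dilS0.mulVec w₀ + dilS1.mulVec w₁) ↔
      (v 0 = 1/3*(w₀ 0 + (w₁ 0 + w₁ 1)) ∧ v 1 = 1/3*((w₀ 0 + w₀ 1) + w₁ 1)) := by
  rw [funext_iff, Fin.forall_fin_two]
  simp [dilS0, dilS1, Matrix.mulVec, dotProduct, Fin.sum_univ_two]

/-- component form of the dilation equation -/
lemma sol_comp {f : ℝ → Fin 2 → ℝ} (hf : IsDilationSolution f) (t : ℝ) :
    f t 0 = 1/3*(f (2*t) 0 + (f (2*t-1) 0 + f (2*t-1) 1)) ∧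
    f t 1 = 1/3*((f (2*t) 0 + f (2*t) 1) + f (2*t-1) 1) :=
  (vec_eq _ _ _).1 (hf.1 t)

/-- one-step contraction lemma for differences that vanish outside (0,1) -/
lemma contraction_step (u v : ℝ → Fin 2 → ℝ) (M : ℝ)
    (hu0 : ∀ t : ℝ, t ≤ 0 → ∀ i, u t i = 0) (hu1 : ∀ t : ℝ, (1:ℝ) ≤ t → ∀ i, u t i = 0)
    (hb : ∀ t i, |u t i| ≤ M)
    (hv0 : ∀ t : ℝ, v t 0 = 1/3*(u (2*t) 0 + (u (2*t-1) 0 + u (2*t-1) 1)))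
    (hv1 : ∀ t : ℝ, v t 1 = 1/3*((u (2*t) 0 + u (2*t) 1) + u (2*t-1) 1)) :
    ∀ t i, |v t i| ≤ 2/3 * M := by
  have hM : 0 ≤ M := le_trans (abs_nonneg _) (hb 0 0)
  intro t i
  rcases le_or_gt t (1/2) with ht | ht
  · have e : ∀ i, u (2*t-1) i = 0 := hu0 _ (by linarith)
    fin_cases i
    · show |v t 0| ≤ 2/3*M
      rw [hv0, e 0, e 1]
      have := hb (2*t) 0; rw [abs_le] at this ⊢; constructor <;> linarith
    · show |v t 1| ≤ 2/3*M
      rw [hv1, e 1]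
      have h1 := hb (2*t) 0; have h2 := hb (2*t) 1
      rw [abs_le] at h1 h2 ⊢; constructor <;> linarith
  · have e : ∀ i, u (2*t) i = 0 := hu1 _ (by linarith)
    fin_cases i
    · show |v t 0| ≤ 2/3*M
      rw [hv0, e 0]
      have h1 := hb (2*t-1) 0; have h2 := hb (2*t-1) 1
      rw [abs_le] at h1 h2 ⊢; constructor <;> linarith
    · show |v t 1| ≤ 2/3*M
      rw [hv1, e 0, e 1]
      have := hb (2*t-1) 1; rw [abs_le] at this ⊢; constructor <;> linarith

/-- uniqueness of bounded solutions -/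
lemma sol_unique {g h : ℝ → Fin 2 → ℝ} {Cg Ch : ℝ}
    (hbg : ∀ t i, |g t i| ≤ Cg) (hbh : ∀ t i, |h t i| ≤ Ch)
    (hg : IsDilationSolution g) (hh : IsDilationSolution h) : g = h := by
  set u : ℝ → Fin 2 → ℝ := fun t i => g t i - h t i with hu
  have hu0 : ∀ t : ℝ, t ≤ 0 → ∀ i, u t i = 0 := by
    intro t ht i; simp [hu, hg.2.1 t ht, hh.2.1 t ht]
  have hu1 : ∀ t : ℝ, (1:ℝ) ≤ t → ∀ i, u t i = 0 := by
    intro t ht i; simp [hu, hg.2.2 t ht, hh.2.2 t ht]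
  have hv0 : ∀ t : ℝ, u t 0 = 1/3*(u (2*t) 0 + (u (2*t-1) 0 + u (2*t-1) 1)) := by
    intro t
    have h1 := (sol_comp hg t).1; have h2 := (sol_comp hh t).1
    simp only [hu]; linarith
  have hv1 : ∀ t : ℝ, u t 1 = 1/3*((u (2*t) 0 + u (2*t) 1) + u (2*t-1) 1) := by
    intro t
    have h1 := (sol_comp hg t).2; have h2 := (sol_comp hh t).2
    simp only [hu]; linarith
  have key : ∀ n : ℕ, ∀ t i, |u t i| ≤ (2/3)^n * (Cg + Ch) := by
    intro n
    induction n with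
    | zero =>
      intro t i
      simp only [pow_zero, one_mul]
      calc |u t i| ≤ |g t i| + |h t i| := abs_sub _ _
        _ ≤ Cg + Ch := add_le_add (hbg t i) (hbh t i)
    | succ n ih =>
      have := contraction_step u u ((2/3)^n * (Cg + Ch)) hu0 hu1 ih hv0 hv1
      intro t i
      calc |u t i| ≤ 2/3 * ((2/3)^n * (Cg + Ch)) := this t i
        _ = (2/3)^(n+1) * (Cg + Ch) := by ring
  funext t i
  have h0 : Tendsto (fun n : ℕ => (2/3:ℝ)^n * (Cg + Ch)) atTop (𝓝 0) := by
    rw [show (0:ℝ) = 0 * (Cg + Ch) by ring]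
    exact (tendsto_pow_atTop_nhds_zero_of_lt_one (by norm_num) (by norm_num)).mul_const _
  have : |u t i| ≤ 0 := le_of_tendsto_of_tendsto' tendsto_const_nhds h0 (fun n => key n t i)
  have : u t i = 0 := abs_eq_zero.mp (le_antisymm this (abs_nonneg _))
  simpa [hu, sub_eq_zero] using this

/-- The dilation operator. -/
def Tmap (g : ℝ → Fin 2 → ℝ) : ℝ → Fin 2 → ℝ :=
  fun t => (1/3 : ℝ) • (dilS0.mulVec (g (2*t)) + dilS1.mulVec (g (2*t-1)))

lemma Tmap_comp (g : ℝ → Fin 2 → ℝ) (t : ℝ) :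
    Tmap g t 0 = 1/3*(g (2*t) 0 + (g (2*t-1) 0 + g (2*t-1) 1)) ∧
    Tmap g t 1 = 1/3*((g (2*t) 0 + g (2*t) 1) + g (2*t-1) 1) :=
  (vec_eq _ _ _).1 rfl

/-- base function of the iteration -/
def dbase : ℝ → Fin 2 → ℝ := fun t _ => if 1 ≤ t then 1/2 else 0

/-- the iterates -/
def Fit (n : ℕ) : ℝ → Fin 2 → ℝ := Tmap^[n] dbase

lemma Fit_succ (n : ℕ) : Fit (n+1) = Tmap (Fit n) := Function.iterate_succ_apply' _ _ _

lemma Tmap_bdry {g : ℝ → Fin 2 → ℝ}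
    (h0 : ∀ t : ℝ, t ≤ 0 → ∀ i, g t i = 0) (h1 : ∀ t : ℝ, (1:ℝ) ≤ t → ∀ i, g t i = 1/2) :
    (∀ t : ℝ, t ≤ 0 → ∀ i, Tmap g t i = 0) ∧
      (∀ t : ℝ, (1:ℝ) ≤ t → ∀ i, Tmap g t i = 1/2) := by
  constructor
  · intro t ht i
    have e1 : ∀ i, g (2*t) i = 0 := h0 _ (by linarith)
    have e2 : ∀ i, g (2*t-1) i = 0 := h0 _ (by linarith)
    fin_cases i
    · show Tmap g t 0 = 0
      rw [(Tmap_comp g t).1, e1 0, e2 0, e2 1]; ring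
    · show Tmap g t 1 = 0
      rw [(Tmap_comp g t).2, e1 0, e1 1, e2 1]; ring
  · intro t ht i
    have e1 : ∀ i, g (2*t) i = 1/2 := h1 _ (by linarith)
    have e2 : ∀ i, g (2*t-1) i = 1/2 := h1 _ (by linarith)
    fin_cases i
    · show Tmap g t 0 = 1/2
      rw [(Tmap_comp g t).1, e1 0, e2 0, e2 1]; ring
    · show Tmap g t 1 = 1/2
      rw [(Tmap_comp g t).2, e1 0, e1 1, e2 1]; ring

lemma Fit_bdry (n : ℕ) :
    (∀ t : ℝ, t ≤ 0 → ∀ i, Fit n t i = 0) ∧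
      (∀ t : ℝ, (1:ℝ) ≤ t → ∀ i, Fit n t i = 1/2) := by
  induction n with
  | zero =>
    constructor
    · intro t ht i; simp only [Fit, Function.iterate_zero, id, dbase]
      rw [if_neg (by linarith)]
    · intro t ht i; simp [Fit, dbase, ht]
  | succ n ih =>
    rw [Fit_succ]; exact Tmap_bdry ih.1 ih.2

lemma Fit_bdd (n : ℕ) : ∀ t i, |Fit n t i| ≤ 1/2 := by
  induction n with
  | zero =>
    intro t i
    simp only [Fit, Function.iterate_zero, id, dbase]
    split <;> norm_num [abs_of_nonneg]
  | succ n ih =>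
    intro t i
    rw [Fit_succ]
    fin_cases i
    · show |Tmap (Fit n) t 0| ≤ 1/2
      rw [(Tmap_comp _ t).1]
      have h1 := ih (2*t) 0; have h2 := ih (2*t-1) 0; have h3 := ih (2*t-1) 1
      rw [abs_le] at h1 h2 h3 ⊢; constructor <;> linarith
    · show |Tmap (Fit n) t 1| ≤ 1/2
      rw [(Tmap_comp _ t).2]
      have h1 := ih (2*t) 0; have h2 := ih (2*t) 1; have h3 := ih (2*t-1) 1
      rw [abs_le] at h1 h2 h3 ⊢; constructor <;> linarith

lemma Fit_diff (n : ℕ) : ∀ t i, |Fit (n+1) t i - Fit n t i| ≤ (2/3)^n * 1 := by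
  induction n with
  | zero =>
    intro t i
    simp only [pow_zero, one_mul]
    calc |Fit 1 t i - Fit 0 t i| ≤ |Fit 1 t i| + |Fit 0 t i| := abs_sub _ _
      _ ≤ 1 := by have := Fit_bdd 1 t i; have := Fit_bdd 0 t i; linarith
  | succ n ih =>
    have hd0 : ∀ t : ℝ, t ≤ 0 → ∀ i, Fit (n+1) t i - Fit n t i = 0 := by
      intro t ht i; rw [(Fit_bdry (n+1)).1 t ht i, (Fit_bdry n).1 t ht i]; ring
    have hd1 : ∀ t : ℝ, (1:ℝ) ≤ t → ∀ i, Fit (n+1) t i - Fit n t i = 0 := by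
      intro t ht i; rw [(Fit_bdry (n+1)).2 t ht i, (Fit_bdry n).2 t ht i]; ring
    have hv0 : ∀ t : ℝ, (fun t i => Fit (n+2) t i - Fit (n+1) t i) t 0 =
        1/3*((fun t i => Fit (n+1) t i - Fit n t i) (2*t) 0 +
          ((fun t i => Fit (n+1) t i - Fit n t i) (2*t-1) 0 +
            (fun t i => Fit (n+1) t i - Fit n t i) (2*t-1) 1)) := by
      intro t
      have h1 := (Tmap_comp (Fit (n+1)) t).1
      have h2 := (Tmap_comp (Fit n) t).1
      rw [← Fit_succ] at h1 h2
      simp only; linarith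
    have hv1 : ∀ t : ℝ, (fun t i => Fit (n+2) t i - Fit (n+1) t i) t 1 =
        1/3*(((fun t i => Fit (n+1) t i - Fit n t i) (2*t) 0 +
          (fun t i => Fit (n+1) t i - Fit n t i) (2*t) 1) +
            (fun t i => Fit (n+1) t i - Fit n t i) (2*t-1) 1) := by
      intro t
      have h1 := (Tmap_comp (Fit (n+1)) t).2
      have h2 := (Tmap_comp (Fit n) t).2
      rw [← Fit_succ] at h1 h2
      simp only; linarith
    have := contraction_step (fun t i => Fit (n+1) t i - Fit n t i)
      (fun t i => Fit (n+2) t i - Fit (n+1) t i) ((2/3)^n * 1) hd0 hd1 ih hv0 hv1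
    intro t i
    calc |Fit (n+2) t i - Fit (n+1) t i| ≤ 2/3 * ((2/3)^n * 1) := this t i
      _ = (2/3)^(n+1) * 1 := by ring

lemma Fit_cauchy (t : ℝ) (i : Fin 2) : CauchySeq (fun n => Fit n t i) :=
  cauchySeq_of_le_geometric (2/3) 1 (by norm_num)
    (fun n => by
      rw [Real.dist_eq, abs_sub_comm]
      calc |Fit (n+1) t i - Fit n t i| ≤ (2/3)^n * 1 := Fit_diff n t i
        _ = 1 * (2/3)^n := by ring)

/-- the solution -/
def fsol : ℝ → Fin 2 → ℝ := fun t i => limUnder atTop (fun n => Fit n t i)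

lemma fsol_tendsto (t : ℝ) (i : Fin 2) :
    Tendsto (fun n => Fit n t i) atTop (𝓝 (fsol t i)) :=
  (Fit_cauchy t i).tendsto_limUnder

lemma fsol_bdd : ∀ t i, |fsol t i| ≤ 1/2 := by
  intro t i
  exact le_of_tendsto' ((fsol_tendsto t i).abs) (fun n => Fit_bdd n t i)

lemma fsol_sol : IsDilationSolution fsol := by
  refine ⟨?_, ?_, ?_⟩
  · intro t
    rw [vec_eq]
    constructor
    · refine tendsto_nhds_unique ((fsol_tendsto t 0).comp (tendsto_add_atTop_nat 1)) ?_
      have h : ∀ n : ℕ, Fit (n+1) t 0 =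
          1/3*(Fit n (2*t) 0 + (Fit n (2*t-1) 0 + Fit n (2*t-1) 1)) := by
        intro n; rw [Fit_succ]; exact (Tmap_comp _ t).1
      have hlim : Tendsto (fun n : ℕ => Fit (n+1) t 0) atTop
          (𝓝 (1/3*(fsol (2*t) 0 + (fsol (2*t-1) 0 + fsol (2*t-1) 1)))) := by
        simp only [h]
        exact (((fsol_tendsto (2*t) 0).add
          ((fsol_tendsto (2*t-1) 0).add (fsol_tendsto (2*t-1) 1))).const_mul _)
      exact hlim
    · refine tendsto_nhds_unique ((fsol_tendsto t 1).comp (tendsto_add_atTop_nat 1)) ?_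
      have h : ∀ n : ℕ, Fit (n+1) t 1 =
          1/3*((Fit n (2*t) 0 + Fit n (2*t) 1) + Fit n (2*t-1) 1) := by
        intro n; rw [Fit_succ]; exact (Tmap_comp _ t).2
      have hlim : Tendsto (fun n : ℕ => Fit (n+1) t 1) atTop
          (𝓝 (1/3*((fsol (2*t) 0 + fsol (2*t) 1) + fsol (2*t-1) 1))) := by
        simp only [h]
        exact ((((fsol_tendsto (2*t) 0).add (fsol_tendsto (2*t) 1)).add
          (fsol_tendsto (2*t-1) 1)).const_mul _)
      exact hlim
  · intro t ht
    funext i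
    refine tendsto_nhds_unique (fsol_tendsto t i) ?_
    have h : (fun n : ℕ => Fit n t i) = fun _ : ℕ => (0:ℝ) := by
      funext n; exact (Fit_bdry n).1 t ht i
    rw [h]; simpa using tendsto_const_nhds
  · intro t ht
    funext i
    refine tendsto_nhds_unique (fsol_tendsto t i) ?_
    have h : (fun n : ℕ => Fit n t i) = fun _ : ℕ => (1/2:ℝ) := by
      funext n; exact (Fit_bdry n).2 t ht i
    rw [h]; simpa using tendsto_const_nhds


/-- There is a unique bounded solution f = (f₀, f₁) of the dilation equation with the given
boundary conditions; moreover it satisfies f(1/2) = (1/6, 1/3)ᵀ and f₀ is Hölder continuous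
with exponent log₂(3/τ), where τ is the golden ratio. -/
theorem dilation_solution_exists_unique :
    (∃! f : ℝ → Fin 2 → ℝ,
      (∃ C : ℝ, ∀ (t : ℝ) (i : Fin 2), |f t i| ≤ C) ∧ IsDilationSolution f) ∧
    ∀ f : ℝ → Fin 2 → ℝ,
      (∃ C : ℝ, ∀ (t : ℝ) (i : Fin 2), |f t i| ≤ C) → IsDilationSolution f →
        f (1 / 2) = ![1 / 6, 1 / 3] ∧
        ∃ C : ℝ≥0, HolderWith C (Real.toNNReal (Real.logb 2 (3 / goldenRatio)))
          (fun t => f t 0) := by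
  have hτ1 : 1 < goldenRatio := one_lt_goldenRatio
  have hτ2 : goldenRatio < 2 := goldenRatio_lt_two
  constructor
  · refine ⟨fsol, ⟨⟨1/2, fsol_bdd⟩, fsol_sol⟩, ?_⟩
    rintro g ⟨⟨Cg, hCg⟩, hg⟩
    exact sol_unique hCg fsol_bdd hg fsol_sol
  · rintro f ⟨C, hC⟩ hf
    have hC0 : 0 ≤ C := le_trans (abs_nonneg _) (hC 0 0)
    have heq0 : ∀ t : ℝ, f t 0 = 1/3*(f (2*t) 0 + (f (2*t-1) 0 + f (2*t-1) 1)) :=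
      fun t => (sol_comp hf t).1
    have heq1 : ∀ t : ℝ, f t 1 = 1/3*((f (2*t) 0 + f (2*t) 1) + f (2*t-1) 1) :=
      fun t => (sol_comp hf t).2
    have h0' : ∀ t : ℝ, t ≤ 0 → ∀ i, f t i = 0 := fun t ht i => by rw [hf.2.1 t ht]; rfl
    have h1' : ∀ t : ℝ, (1:ℝ) ≤ t → ∀ i, f t i = 1/2 := fun t ht i => by rw [hf.2.2 t ht]
    constructor
    · -- value at 1/2
      have h := sol_comp hf (1/2)
      have e1 : ∀ i, f (2*(1/2:ℝ)) i = 1/2 := h1' _ (by norm_num)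
      have e0 : ∀ i, f (2*(1/2:ℝ)-1) i = 0 := h0' _ (by norm_num)
      funext i
      fin_cases i
      · show f (1/2) 0 = ![(1:ℝ)/6, 1/3] 0
        rw [h.1, e1 0, e0 0, e0 1]
        norm_num
      · show f (1/2) 1 = ![(1:ℝ)/6, 1/3] 1
        rw [h.2, e1 0, e1 1, e0 1]
        norm_num
    · -- Hölder continuity
      have hosc : ∀ n : ℕ, ∀ k : ℕ, k + 1 ≤ 2^n →
          ∀ t s : ℝ, (k:ℝ)/2^n ≤ t → t ≤ ((k:ℝ)+1)/2^n → (k:ℝ)/2^n ≤ s →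
            s ≤ ((k:ℝ)+1)/2^n →
          |f t 0 - f s 0| ≤ (goldenRatio/3)^n * (2*C*goldenRatio) := by
        intro n k hk t s ht1 ht2 hs1 hs2
        have h := key_estimate hC heq0 heq1 h0' h1' n k hk t s ht1 ht2 hs1 hs2
          1 0 zero_le_one le_rfl
        simp only [one_mul, zero_mul, add_zero, mul_zero, zero_add, mul_one] at h
        rw [max_eq_left (by linarith : goldenRatio - 1 ≤ 1)] at h
        simpa using h
      have hold := dyadic_osc hosc hC0 h0' h1'
      have hα : 0 < logb 2 (3/goldenRatio) :=
        Real.logb_pos (by norm_num) (by rw [lt_div_iff₀ goldenRatio_pos]; linarith)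
      have hKp : (0:ℝ) ≤ 12*C*goldenRatio := by nlinarith
      refine ⟨Real.toNNReal (12*C*goldenRatio), ?_⟩
      intro x y
      show edist (f x 0) (f y 0) ≤ _ * edist x y ^ _
      rw [edist_dist, edist_dist]
      have hcoe : ((Real.toNNReal (12*C*goldenRatio)) : ENNReal) =
          ENNReal.ofReal (12*C*goldenRatio) := rfl
      have hr : ((Real.toNNReal (logb 2 (3/goldenRatio))):ℝ) = logb 2 (3/goldenRatio) :=
        Real.coe_toNNReal _ hα.le
      rw [hcoe, hr, ENNReal.ofReal_rpow_of_nonneg dist_nonneg hα.le,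
        ← ENNReal.ofReal_mul hKp]
      apply ENNReal.ofReal_le_ofReal
      rw [Real.dist_eq, Real.dist_eq]
      exact hold x y
end
end

section
/- Let f = (f₀, f₁) : ℝ → ℝ² be the unique bounded solution of the dilation equation f(t) = (1/3)(S₀ f(2t) + S₁ f(2t-1)) with f(t) = 0 for t ≤ 0 and f(t) = (1/2, 1/2)ᵀ for t ≥ 1. Then for every ε > 0, the summatory function of Stern's sequence satisfies ∑_{n ≤ x} s(n) = 3^{⌊log₂ x⌋ + 1} · f₀(2^{⟨log₂ x⟩ - 1}) + O(x^{log₂ τ + ε}) as x → ∞, where ⌊y⌋ and ⟨y⟩ denote the integer and fractional parts of y, and τ = (1+√5)/2 is the golden ratio. -/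
open MeasureTheory Filter Topology Real
open scoped ENNReal

noncomputable section

/-- Stern's diatomic sequence: s(0)=0, s(1)=1, s(2n)=s(n), s(2n+1)=s(n)+s(n+1). -/
def stern : ℕ → ℕ
  | 0 => 0
  | 1 => 1
  | n + 2 =>
    if h : n % 2 = 0 then stern (n / 2 + 1)
    else stern (n / 2 + 1) + stern (n / 2 + 2)
decreasing_by all_goals omega
lemma stern_two_mul (n : ℕ) : stern (2*n) = stern n := by
  cases n with
  | zero => rfl
  | succ k =>
    show stern (2*k + 2) = stern (k+1)
    rw [stern]
    have h1 : (2*k) % 2 = 0 := by omega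
    have h2 : (2*k) / 2 = k := by omega
    simp [h1, h2]

lemma stern_two_mul_add_one (n : ℕ) : stern (2*n+1) = stern n + stern (n+1) := by
  cases n with
  | zero => simp [stern]
  | succ k =>
    show stern (2*k+1 + 2) = stern (k+1) + stern (k+2)
    rw [stern]
    have h1 : (2*k+1) % 2 = 1 := by omega
    have h2 : (2*k+1) / 2 = k := by omega
    simp [h1, h2]

def sT (n : ℕ) : ℕ := ∑ i ∈ Finset.range n, stern i

lemma sT_succ (n : ℕ) : sT (n+1) = sT n + stern n := by
  rw [sT, Finset.sum_range_succ, ← sT]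

lemma sT_two_mul (n : ℕ) : sT (2*n) = 3 * sT n + stern n := by
  induction n with
  | zero => simp [sT, stern]
  | succ k ih =>
    have e : 2*(k+1) = (2*k) + 1 + 1 := by ring
    rw [e, sT_succ, sT_succ, ih, stern_two_mul, stern_two_mul_add_one, sT_succ]
    ring

lemma sT_two_mul_add_one (n : ℕ) : sT (2*n+1) = 3 * sT n + 2 * stern n := by
  rw [sT_succ, sT_two_mul, stern_two_mul]
  ring

lemma stern_small : stern 0 = 0 ∧ stern 1 = 1 ∧ stern 2 = 1 ∧ stern 3 = 2 ∧ stern 4 = 1 := by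
  have h0 : stern 0 = 0 := by simp [stern]
  have h1 : stern 1 = 1 := by simp [stern]
  have h2 : stern 2 = 1 := by rw [show (2:ℕ) = 2*1 by ring, stern_two_mul, h1]
  have h3 : stern 3 = 2 := by
    rw [show (3:ℕ) = 2*1+1 by ring, stern_two_mul_add_one]
    rw [show (1:ℕ)+1 = 2 by ring, h1, h2]
  have h4 : stern 4 = 1 := by rw [show (4:ℕ) = 2*2 by ring, stern_two_mul, h2]
  exact ⟨h0, h1, h2, h3, h4⟩

lemma sT_small : sT 0 = 0 ∧ sT 1 = 0 ∧ sT 2 = 1 ∧ sT 3 = 2 ∧ sT 4 = 4 := by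
  obtain ⟨s0, s1, s2, s3, s4⟩ := stern_small
  have h0 : sT 0 = 0 := by simp [sT]
  have h1 : sT 1 = sT 0 + stern 0 := sT_succ 0
  have h2 : sT 2 = sT 1 + stern 1 := sT_succ 1
  have h3 : sT 3 = sT 2 + stern 2 := sT_succ 2
  have h4 : sT 4 = sT 3 + stern 3 := sT_succ 3
  omega
lemma stern_S1 : ∀ j n, n ≤ 2^j → stern (2^(j+1) + n) = stern (2^j + n) + stern n := by
  intro j
  induction j with
  | zero =>
    intro n hn
    have hs := stern_small
    interval_cases n <;> simp <;> omega
  | succ j ih =>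
    intro n hn
    obtain ⟨k, rfl | rfl⟩ := Nat.even_or_odd' n
    · have hk : k ≤ 2^j := by omega
      have e1 : 2^(j+1+1) + 2*k = 2*(2^(j+1)+k) := by ring
      have e2 : 2^(j+1) + 2*k = 2*(2^j+k) := by ring
      rw [e1, e2, stern_two_mul, stern_two_mul, stern_two_mul, ih k hk]
    · have hk : k ≤ 2^j := by omega
      have hk1 : k + 1 ≤ 2^j := by omega
      have e1 : 2^(j+1+1) + (2*k+1) = 2*(2^(j+1)+k)+1 := by ring
      have e2 : 2^(j+1) + (2*k+1) = 2*(2^j+k)+1 := by ring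
      rw [e1, e2, stern_two_mul_add_one, stern_two_mul_add_one, stern_two_mul_add_one]
      have e3 : 2^(j+1)+k+1 = 2^(j+1)+(k+1) := by ring
      have e4 : 2^j+k+1 = 2^j+(k+1) := by ring
      rw [e3, e4, ih k hk, ih (k+1) hk1]
      ring

lemma stern_S2 : ∀ j n, n ≤ 2^j → stern (3*2^j + n) + stern n = 2 * stern (2^j + n) := by
  intro j
  induction j with
  | zero =>
    intro n hn
    have hs := stern_small
    interval_cases n <;> simp <;> omega
  | succ j ih =>
    intro n hn
    obtain ⟨k, rfl | rfl⟩ := Nat.even_or_odd' n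
    · have hk : k ≤ 2^j := by omega
      have e1 : 3*2^(j+1) + 2*k = 2*(3*2^j+k) := by ring
      have e2 : 2^(j+1) + 2*k = 2*(2^j+k) := by ring
      rw [e1, e2, stern_two_mul, stern_two_mul, stern_two_mul, ih k hk]
    · have hk : k ≤ 2^j := by omega
      have hk1 : k + 1 ≤ 2^j := by omega
      have e1 : 3*2^(j+1) + (2*k+1) = 2*(3*2^j+k)+1 := by ring
      have e2 : 2^(j+1) + (2*k+1) = 2*(2^j+k)+1 := by ring
      rw [e1, e2, stern_two_mul_add_one, stern_two_mul_add_one, stern_two_mul_add_one]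
      have e3 : 3*2^j+k+1 = 3*2^j+(k+1) := by ring
      have e4 : 2^j+k+1 = 2^j+(k+1) := by ring
      have h1 := ih k hk
      have h2 := ih (k+1) hk1
      rw [e3, e4]
      omega

lemma stern_T1 : ∀ j n, n ≤ 2^j → sT (2^(j+1) + n) = sT (2^j + n) + sT n + 3^j := by
  intro j
  induction j with
  | zero =>
    intro n hn
    have b0 := sT_small
    interval_cases n <;> simp <;> omega
  | succ j ih =>
    intro n hn
    obtain ⟨k, rfl | rfl⟩ := Nat.even_or_odd' n
    · have hk : k ≤ 2^j := by omega
      have e1 : 2^(j+1+1) + 2*k = 2*(2^(j+1)+k) := by ring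
      have e2 : 2^(j+1) + 2*k = 2*(2^j+k) := by ring
      rw [e1, e2, sT_two_mul, sT_two_mul, sT_two_mul, ih k hk, stern_S1 j k hk]
      ring
    · have hk : k ≤ 2^j := by omega
      have e1 : 2^(j+1+1) + (2*k+1) = 2*(2^(j+1)+k)+1 := by ring
      have e2 : 2^(j+1) + (2*k+1) = 2*(2^j+k)+1 := by ring
      rw [e1, e2, sT_two_mul_add_one, sT_two_mul_add_one, sT_two_mul_add_one,
        ih k hk, stern_S1 j k hk]
      ring

lemma stern_T2 : ∀ j n, n ≤ 2^j → sT (3*2^j + n) + sT n = 2 * sT (2^j + n) + 2*3^j := by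
  intro j
  induction j with
  | zero =>
    intro n hn
    have b0 := sT_small
    interval_cases n <;> simp <;> omega
  | succ j ih =>
    intro n hn
    obtain ⟨k, rfl | rfl⟩ := Nat.even_or_odd' n
    · have hk : k ≤ 2^j := by omega
      have e1 : 3*2^(j+1) + 2*k = 2*(3*2^j+k) := by ring
      have e2 : 2^(j+1) + 2*k = 2*(2^j+k) := by ring
      have h1 := ih k hk
      have h2 := stern_S2 j k hk
      rw [e1, e2, sT_two_mul, sT_two_mul, sT_two_mul]
      have : (3:ℕ)^(j+1) = 3*3^j := by ring
      omega
    · have hk : k ≤ 2^j := by omega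
      have e1 : 3*2^(j+1) + (2*k+1) = 2*(3*2^j+k)+1 := by ring
      have e2 : 2^(j+1) + (2*k+1) = 2*(2^j+k)+1 := by ring
      have h1 := ih k hk
      have h2 := stern_S2 j k hk
      rw [e1, e2, sT_two_mul_add_one, sT_two_mul_add_one, sT_two_mul_add_one]
      have : (3:ℕ)^(j+1) = 3*3^j := by ring
      omega
lemma gold_pow_succ (n : ℕ) : goldenRatio^(n+2) = goldenRatio^(n+1) + goldenRatio^n := by
  have h : goldenRatio^(n+2) = goldenRatio^n * goldenRatio^2 := by ring
  rw [h, goldenRatio_sq]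
  ring

lemma stern_gold_bound : ∀ j : ℕ, ∀ n ≤ 2^j,
    (stern n : ℝ) ≤ goldenRatio^(j+1) ∧
      (stern n : ℝ) + (stern (n+1) : ℝ) ≤ goldenRatio^(j+2) := by
  intro j
  induction j with
  | zero =>
    intro n hn
    obtain ⟨s0, s1, s2, s3, s4⟩ := stern_small
    have hg1 : (1:ℝ) ≤ goldenRatio := le_of_lt one_lt_goldenRatio
    have hg2 : goldenRatio^(0+2) = goldenRatio + 1 := by
      rw [show (0:ℕ)+2 = 2 by rfl, goldenRatio_sq]
    interval_cases n
    · rw [s0]; constructor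
      · simpa using le_trans zero_le_one (by simpa using hg1)
      · rw [s1]; push_cast; rw [hg2]; linarith
    · rw [s1, s2]; constructor
      · simpa using hg1
      · push_cast; rw [hg2]; linarith
  | succ j ih =>
    intro n hn
    have hgpos : (0:ℝ) < goldenRatio := goldenRatio_pos
    have hg1 : (1:ℝ) ≤ goldenRatio := le_of_lt one_lt_goldenRatio
    have mono : ∀ a b : ℕ, a ≤ b → goldenRatio^a ≤ goldenRatio^b := fun a b h =>
      pow_le_pow_right₀ hg1 h
    obtain ⟨k, rfl | rfl⟩ := Nat.even_or_odd' n
    · have hk : k ≤ 2^j := by omega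
      obtain ⟨h1, h2⟩ := ih k hk
      constructor
      · rw [stern_two_mul]
        exact le_trans h1 (mono _ _ (by omega))
      · rw [stern_two_mul_add_one, stern_two_mul, gold_pow_succ (j+1)]
        push_cast
        push_cast at h1 h2
        linarith
    · have hk : k ≤ 2^j := by omega
      have hk1 : k+1 ≤ 2^j := by omega
      obtain ⟨h1, h2⟩ := ih k hk
      obtain ⟨h1', _⟩ := ih (k+1) hk1
      constructor
      · rw [stern_two_mul_add_one]
        push_cast
        push_cast at h2
        linarith
      · have e1 : 2*k+1+1 = 2*(k+1) := by ring
        rw [stern_two_mul_add_one, e1, stern_two_mul, gold_pow_succ (j+1)]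
        push_cast
        push_cast at h1' h2
        linarith

/-- Discrete self-similar approximation to `3^m f(n/2^m)`. -/
def Wf : ℕ → ℕ → ℝ × ℝ
  | 0, n => if n = 0 then (0, 0) else (1/2, 1/2)
  | (m+1), n =>
      ((Wf m (min n (2^m))).1 + (Wf m (n - 2^m)).1 + (Wf m (n - 2^m)).2,
       (Wf m (min n (2^m))).1 + (Wf m (min n (2^m))).2 + (Wf m (n - 2^m)).2)

lemma Wf_zero (m : ℕ) : Wf m 0 = (0, 0) := by
  induction m with
  | zero => simp [Wf]
  | succ m ih => simp [Wf, ih]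

lemma Wf_ge : ∀ m : ℕ, ∀ n, 2^m ≤ n → Wf m n = ((3:ℝ)^m/2, (3:ℝ)^m/2) := by
  intro m
  induction m with
  | zero =>
    intro n hn
    have : n ≠ 0 := by omega
    simp [Wf, this]
  | succ m ih =>
    intro n hn
    have h1 : min n (2^m) = 2^m := by
      have hp : (2:ℕ)^m ≤ 2^(m+1) := Nat.pow_le_pow_right (by norm_num) (by omega)
      omega
    have h2 : 2^m ≤ n - 2^m := by
      have : 2^(m+1) = 2^m + 2^m := by ring
      omega
    show Wf (m+1) n = _
    rw [Wf, h1, ih (2^m) le_rfl, ih _ h2]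
    have : (3:ℝ)^(m+1) = 3 * 3^m := by ring
    rw [this, Prod.mk.injEq]
    constructor <;> ring

/-- Exact values of `Wf` in terms of Stern sums, for `n ≤ 2^m`. -/
lemma Wf_eq : ∀ m : ℕ, ∀ n ≤ 2^m,
    2 * (Wf m n).1 = 2 * (sT n : ℝ) + (stern n : ℝ) ∧
    2 * (Wf m n).2 + (2 * (sT n : ℝ) + (stern n : ℝ)) + (3:ℝ)^m
      = 2 * (sT (2^m + n) : ℝ) + (stern (2^m + n) : ℝ) := by
  intro m
  induction m with
  | zero =>
    intro n hn
    obtain ⟨s0, s1, s2, s3, s4⟩ := stern_small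
    obtain ⟨t0, t1, t2, t3, t4⟩ := sT_small
    interval_cases n
    · simp [Wf, s0, s1, t0, t1]
    · simp [Wf, s1, s2, t1, t2]
      norm_num
  | succ m ih =>
    intro n hn
    by_cases hcase : n ≤ 2^m
    · -- lower half
      have hmin : min n (2^m) = n := by omega
      have hsub : n - 2^m = 0 := by omega
      obtain ⟨ih1, ih2⟩ := ih n hcase
      have key1 : (sT (2^(m+1) + n) : ℝ) = (sT (2^m + n) : ℝ) + (sT n : ℝ) + (3:ℝ)^m := by
        have h := stern_T1 m n hcase
        exact_mod_cast congrArg (fun x : ℕ => (x:ℝ)) h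
      have key2 : (stern (2^(m+1) + n) : ℝ) = (stern (2^m + n) : ℝ) + (stern n : ℝ) := by
        have h := stern_S1 m n hcase
        exact_mod_cast congrArg (fun x : ℕ => (x:ℝ)) h
      show 2 * (Wf (m+1) n).1 = _ ∧ _
      rw [Wf, hmin, hsub, Wf_zero]
      constructor
      · simpa using ih1
      · simp only []
        rw [key1, key2]
        have e3 : (3:ℝ)^(m+1) = 3 * 3^m := by ring
        rw [e3]
        push_cast at ih1 ih2 ⊢
        linarith
    · -- upper half
      have hmin : min n (2^m) = 2^m := by omega
      set k := n - 2^m with hk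
      have hkle : k ≤ 2^m := by
        have : 2^(m+1) = 2^m + 2^m := by ring
        omega
      have hnk : n = 2^m + k := by omega
      obtain ⟨ih1, ih2⟩ := ih k hkle
      have htop := Wf_ge m (2^m) le_rfl
      -- values at 2^m : use ih at n = 2^m
      obtain ⟨iht1, iht2⟩ := ih (2^m) le_rfl
      have key2 : (stern (3*2^m + k) : ℝ) + (stern k : ℝ) = 2 * (stern (2^m + k) : ℝ) := by
        have h := stern_S2 m k hkle
        exact_mod_cast congrArg (fun x : ℕ => (x:ℝ)) h
      have key1 : (sT (3*2^m + k) : ℝ) + (sT k : ℝ)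
          = 2 * (sT (2^m + k) : ℝ) + 2 * (3:ℝ)^m := by
        have h := stern_T2 m k hkle
        exact_mod_cast congrArg (fun x : ℕ => (x:ℝ)) h
      have e1 : 2^(m+1) + n = 3*2^m + k := by
        have : 2^(m+1) = 2^m + 2^m := by ring
        omega
      show 2 * (Wf (m+1) n).1 = _ ∧ _
      rw [Wf, hmin, ← hk, htop, e1, hnk]
      have e3 : (3:ℝ)^(m+1) = 3 * 3^m := by ring
      constructor
      · simp only []
        push_cast at ih1 ih2 ⊢
        linarith
      · simp only []
        rw [e3]
        push_cast at ih1 ih2 key1 key2 ⊢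
        linarith
def Nrm (a b : ℝ) : ℝ := max (max |a| |b|) ((|a| + |b|) / goldenRatio)

lemma Nrm_fst (a b : ℝ) : |a| ≤ Nrm a b := le_trans (le_max_left _ _) (le_max_left _ _)
lemma Nrm_snd (a b : ℝ) : |b| ≤ Nrm a b := le_trans (le_max_right _ _) (le_max_left _ _)

lemma Nrm_le_add (a b : ℝ) : Nrm a b ≤ |a| + |b| := by
  have hg1 : (1:ℝ) < goldenRatio := one_lt_goldenRatio
  have h0a : (0:ℝ) ≤ |a| := abs_nonneg a
  have h0b : (0:ℝ) ≤ |b| := abs_nonneg b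
  apply max_le (max_le (by linarith) (by linarith))
  rw [div_le_iff₀ goldenRatio_pos]
  nlinarith

lemma Nrm_S0 (a b : ℝ) : Nrm a (a + b) ≤ goldenRatio * Nrm a b := by
  have hg1 : (1:ℝ) < goldenRatio := one_lt_goldenRatio
  have hsq := goldenRatio_sq
  set N := Nrm a b with hN
  have hA : |a| ≤ N := Nrm_fst a b
  have hB : |b| ≤ N := Nrm_snd a b
  have hS : |a| + |b| ≤ goldenRatio * N := by
    have h := le_trans (le_max_right _ _) (le_refl (Nrm a b))
    have h2 : (|a| + |b|) / goldenRatio ≤ N := le_trans (le_max_right _ _) le_rfl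
    rw [div_le_iff₀ goldenRatio_pos] at h2
    linarith [h2]
  have hN0 : 0 ≤ N := le_trans (abs_nonneg a) hA
  have hab : |a + b| ≤ |a| + |b| := abs_add_le a b
  apply max_le (max_le ?_ ?_) ?_
  · nlinarith
  · nlinarith
  · rw [div_le_iff₀ goldenRatio_pos]
    nlinarith

lemma Nrm_S1 (a b : ℝ) : Nrm (a + b) b ≤ goldenRatio * Nrm a b := by
  have hg1 : (1:ℝ) < goldenRatio := one_lt_goldenRatio
  have hsq := goldenRatio_sq
  set N := Nrm a b with hN
  have hA : |a| ≤ N := Nrm_fst a b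
  have hB : |b| ≤ N := Nrm_snd a b
  have hS : |a| + |b| ≤ goldenRatio * N := by
    have h2 : (|a| + |b|) / goldenRatio ≤ N := le_trans (le_max_right _ _) le_rfl
    rw [div_le_iff₀ goldenRatio_pos] at h2
    linarith [h2]
  have hN0 : 0 ≤ N := le_trans (abs_nonneg a) hA
  have hab : |a + b| ≤ |a| + |b| := abs_add_le a b
  apply max_le (max_le ?_ ?_) ?_
  · nlinarith
  · nlinarith
  · rw [div_le_iff₀ goldenRatio_pos]
    nlinarith

lemma dilation_approx (f : ℝ → Fin 2 → ℝ) (C : ℝ)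
    (hC : ∀ (t : ℝ) (i : Fin 2), |f t i| ≤ C)
    (hfe : ∀ t : ℝ, 3 * f t 0 = f (2*t) 0 + (f (2*t-1) 0 + f (2*t-1) 1) ∧
            3 * f t 1 = (f (2*t) 0 + f (2*t) 1) + f (2*t-1) 1)
    (hf0 : ∀ t : ℝ, t ≤ 0 → ∀ i, f t i = 0)
    (hf1 : ∀ t : ℝ, 1 ≤ t → ∀ i, f t i = 1/2) :
    ∀ m : ℕ, ∀ t : ℝ,
      Nrm ((3:ℝ)^m * f t 0 - (Wf m (⌊(2:ℝ)^m * t⌋).toNat).1)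
          ((3:ℝ)^m * f t 1 - (Wf m (⌊(2:ℝ)^m * t⌋).toNat).2)
        ≤ goldenRatio^m * (2*C) := by
  have hC0 : 0 ≤ C := le_trans (abs_nonneg _) (hC 0 0)
  intro m
  induction m with
  | zero =>
    intro t
    simp only [pow_zero, one_mul]
    by_cases h1 : (1:ℝ) ≤ t
    · have hfl : (1:ℤ) ≤ ⌊t⌋ := by exact_mod_cast Int.le_floor.mpr (by exact_mod_cast h1)
      have hne : (⌊t⌋).toNat ≠ 0 := by omega
      rw [hf1 t h1 0, hf1 t h1 1]
      show Nrm (1/2 - (Wf 0 _).1) (1/2 - (Wf 0 _).2) ≤ _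
      rw [Wf]
      simp only [hne, if_neg]
      norm_num [Nrm]
      positivity
    · by_cases h0 : t ≤ 0
      · have hfl : ⌊t⌋ ≤ 0 := by
          have := Int.floor_le_floor h0
          simpa using this
        have hz : (⌊t⌋).toNat = 0 := by omega
        rw [hf0 t h0 0, hf0 t h0 1, hz, Wf]
        norm_num [Nrm]
        positivity
      · have hfl : ⌊t⌋ = 0 := by
          have h1' : t < 1 := lt_of_not_ge h1
          have h0' : 0 < t := lt_of_not_ge h0
          exact Int.floor_eq_zero_iff.mpr ⟨le_of_lt h0', h1'⟩
        rw [hfl]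
        show Nrm (f t 0 - (Wf 0 0).1) (f t 1 - (Wf 0 0).2) ≤ _
        rw [Wf]
        simp only [if_pos rfl]
        norm_num
        calc Nrm (f t 0) (f t 1) ≤ |f t 0| + |f t 1| := Nrm_le_add _ _
          _ ≤ 2*C := by have := hC t 0; have := hC t 1; linarith
  | succ m ih =>
    intro t
    obtain ⟨he0, he1⟩ := hfe t
    have hpow : (3:ℝ)^(m+1) = 3^m * 3 := by ring
    have hE0 : (3:ℝ)^(m+1) * f t 0
        = 3^m * f (2*t) 0 + (3^m * f (2*t-1) 0 + 3^m * f (2*t-1) 1) := by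
      linear_combination (3:ℝ)^m * he0
    have hE1 : (3:ℝ)^(m+1) * f t 1
        = (3^m * f (2*t) 0 + 3^m * f (2*t) 1) + 3^m * f (2*t-1) 1 := by
      linear_combination (3:ℝ)^m * he1
    set nI : ℤ := ⌊(2:ℝ)^(m+1) * t⌋ with hnI
    have harg0 : (2:ℝ)^m * (2*t) = 2^(m+1) * t := by ring
    by_cases ht : (1:ℝ)/2 ≤ t
    · -- t ≥ 1/2 : use S₁ branch
      have h2t : (1:ℝ) ≤ 2*t := by linarith
      have hnIlb : (2^m : ℤ) ≤ nI := by
        rw [hnI]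
        apply Int.le_floor.mpr
        push_cast
        have : (2:ℝ)^(m+1) * t = 2^m * (2*t) := by ring
        rw [this]
        nlinarith [pow_pos (show (0:ℝ) < 2 by norm_num) m]
      have hnn : (0:ℤ) ≤ nI := le_trans (by positivity) hnIlb
      have hmin : min (nI.toNat) (2^m) = 2^m := by
        have : (2^m : ℤ) = ((2^m : ℕ) : ℤ) := by push_cast; ring
        omega
      have harg1 : (2:ℝ)^m * (2*t-1) = 2^(m+1) * t - ((2^m : ℕ) : ℤ) := by
        push_cast; ring
      have hfloor1 : ⌊(2:ℝ)^m * (2*t-1)⌋ = nI - (2^m : ℕ) := by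
        rw [harg1, Int.floor_sub_intCast, hnI]
      have htoNat1 : (⌊(2:ℝ)^m * (2*t-1)⌋).toNat = nI.toNat - 2^m := by
        rw [hfloor1]
        have : (2^m : ℤ) = ((2^m : ℕ) : ℤ) := by push_cast; ring
        omega
      have hf2t0 := hf1 (2*t) h2t 0
      have hf2t1 := hf1 (2*t) h2t 1
      have hWtop := Wf_ge m (2^m) le_rfl
      have ihh := ih (2*t - 1)
      rw [htoNat1] at ihh
      show Nrm ((3:ℝ)^(m+1) * f t 0 - (Wf (m+1) nI.toNat).1)
          ((3:ℝ)^(m+1) * f t 1 - (Wf (m+1) nI.toNat).2) ≤ _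
      rw [Wf, hmin, hWtop, hE0, hE1, hf2t0, hf2t1]
      simp only []
      set a := (3:ℝ)^m * f (2*t-1) 0 - (Wf m (nI.toNat - 2^m)).1 with ha
      set b := (3:ℝ)^m * f (2*t-1) 1 - (Wf m (nI.toNat - 2^m)).2 with hb
      have e0 : (3:ℝ)^m * (1/2) + ((3:ℝ)^m * f (2*t-1) 0 + (3:ℝ)^m * f (2*t-1) 1)
          - ((3:ℝ)^m/2 + (Wf m (nI.toNat - 2^m)).1 + (Wf m (nI.toNat - 2^m)).2)
          = a + b := by rw [ha, hb]; ring
      have e1 : ((3:ℝ)^m * (1/2) + (3:ℝ)^m * (1/2)) + (3:ℝ)^m * f (2*t-1) 1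
          - ((3:ℝ)^m/2 + (3:ℝ)^m/2 + (Wf m (nI.toNat - 2^m)).2) = b := by
        rw [hb]; ring
      rw [e0, e1]
      calc Nrm (a+b) b ≤ goldenRatio * Nrm a b := Nrm_S1 a b
        _ ≤ goldenRatio * (goldenRatio^m * (2*C)) := by
            apply mul_le_mul_of_nonneg_left _ (le_of_lt goldenRatio_pos)
            exact ihh
        _ = goldenRatio^(m+1) * (2*C) := by ring
    · -- t < 1/2 : use S₀ branch
      have h2t : 2*t - 1 ≤ 0 := by linarith
      have hnIub : nI < (2:ℤ)^m := by
        rw [hnI]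
        apply Int.floor_lt.mpr
        push_cast
        have : (2:ℝ)^(m+1) * t = 2^m * (2*t) := by ring
        rw [this]
        nlinarith [pow_pos (show (0:ℝ) < 2 by norm_num) m]
      have hnIub' : nI.toNat < 2^m := by
        by_cases hn : 0 ≤ nI
        · have h3 : (nI.toNat : ℤ) = nI := Int.toNat_of_nonneg hn
          have h4 : (nI.toNat : ℤ) < (2:ℤ)^m := by rw [h3]; exact hnIub
          exact_mod_cast h4
        · have h5 : nI.toNat = 0 := Int.toNat_of_nonpos (le_of_not_ge hn)
          rw [h5]
          exact Nat.two_pow_pos m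
      have hmin : min (nI.toNat) (2^m) = nI.toNat := min_eq_left (le_of_lt hnIub')
      have hsub : nI.toNat - 2^m = 0 := by omega
      have hf2t0 := hf0 (2*t-1) h2t 0
      have hf2t1 := hf0 (2*t-1) h2t 1
      have ihh := ih (2*t)
      rw [harg0] at ihh
      show Nrm ((3:ℝ)^(m+1) * f t 0 - (Wf (m+1) nI.toNat).1)
          ((3:ℝ)^(m+1) * f t 1 - (Wf (m+1) nI.toNat).2) ≤ _
      rw [Wf, hmin, hsub, Wf_zero, hE0, hE1, hf2t0, hf2t1]
      simp only []
      set a := (3:ℝ)^m * f (2*t) 0 - (Wf m nI.toNat).1 with ha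
      set b := (3:ℝ)^m * f (2*t) 1 - (Wf m nI.toNat).2 with hb
      have e0 : (3:ℝ)^m * f (2*t) 0 + ((3:ℝ)^m * 0 + (3:ℝ)^m * 0)
          - ((Wf m nI.toNat).1 + 0 + 0) = a := by rw [ha]; ring
      have e1 : ((3:ℝ)^m * f (2*t) 0 + (3:ℝ)^m * f (2*t) 1) + (3:ℝ)^m * 0
          - ((Wf m nI.toNat).1 + (Wf m nI.toNat).2 + 0) = a + b := by rw [ha, hb]; ring
      rw [e0, e1]
      calc Nrm a (a+b) ≤ goldenRatio * Nrm a b := Nrm_S0 a b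
        _ ≤ goldenRatio * (goldenRatio^m * (2*C)) := by
            apply mul_le_mul_of_nonneg_left _ (le_of_lt goldenRatio_pos)
            exact ihh
        _ = goldenRatio^(m+1) * (2*C) := by ring

/-- For the unique bounded solution f of the dilation equation, and every ε > 0, the
summatory function of Stern's sequence satisfies
∑_{n ≤ x} s(n) = 3^{⌊log₂ x⌋+1} · f₀(2^{⟨log₂ x⟩ - 1}) + O(x^{log₂ τ + ε}) as x → ∞. -/
theorem stern_summatory_asymptotics (f : ℝ → Fin 2 → ℝ)
    (hbdd : ∃ C : ℝ, ∀ (t : ℝ) (i : Fin 2), |f t i| ≤ C)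
    (hf : IsDilationSolution f) :
    ∀ ε : ℝ, 0 < ε → ∃ C : ℝ, ∀ x : ℝ, 1 ≤ x →
      |(∑ n ∈ Finset.range (⌊x⌋₊ + 1), (stern n : ℝ)) -
          (3 : ℝ) ^ (⌊Real.logb 2 x⌋ + 1) *
            f ((2 : ℝ) ^ (Int.fract (Real.logb 2 x) - 1)) 0|
        ≤ C * x ^ (Real.logb 2 goldenRatio + ε) := by
  intro ε hε
  obtain ⟨C, hC⟩ := hbdd
  obtain ⟨heq, hb0, hb1⟩ := hf
  have hC0 : 0 ≤ C := le_trans (abs_nonneg _) (hC 0 0)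
  have hgold1 : (1:ℝ) < goldenRatio := one_lt_goldenRatio
  have hfe : ∀ t : ℝ, 3 * f t 0 = f (2*t) 0 + (f (2*t-1) 0 + f (2*t-1) 1) ∧
      3 * f t 1 = (f (2*t) 0 + f (2*t) 1) + f (2*t-1) 1 := by
    intro t
    have h := heq t
    have h0' := congrFun h 0
    have h1' := congrFun h 1
    simp [dilS0, dilS1, Matrix.mulVec, dotProduct, Fin.sum_univ_two,
      Matrix.cons_val_zero, Matrix.cons_val_one, Matrix.head_cons,
      Pi.add_apply, Pi.smul_apply, smul_eq_mul] at h0' h1'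
    constructor <;> linarith
  have hf0' : ∀ t : ℝ, t ≤ 0 → ∀ i : Fin 2, f t i = 0 := by
    intro t ht i; rw [hb0 t ht]; rfl
  have hf1' : ∀ t : ℝ, 1 ≤ t → ∀ i : Fin 2, f t i = 1/2 := by
    intro t ht i; rw [hb1 t ht]
  have happrox := dilation_approx f C hC hfe hf0' hf1'
  set K : ℝ := goldenRatio^2/2 + goldenRatio*(2*C) + 1 with hKdef
  have hK0 : 0 ≤ K := by positivity
  refine ⟨K, ?_⟩
  intro x hx
  have hx0 : (0:ℝ) < x := lt_of_lt_of_le one_pos hx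
  set L : ℝ := Real.logb 2 x with hLdef
  have hL0 : 0 ≤ L := Real.logb_nonneg one_lt_two hx
  set m : ℕ := (⌊L⌋).toNat with hmdef
  have hmz : ((m:ℤ):ℝ) = ((⌊L⌋ : ℤ):ℝ) := by
    rw [hmdef]
    norm_cast
    exact Int.toNat_of_nonneg (Int.floor_nonneg.mpr hL0)
  have hmL : (m:ℝ) ≤ L := by
    rw [show ((m:ℕ):ℝ) = ((⌊L⌋:ℤ):ℝ) from hmz]
    exact Int.floor_le L
  have hLm : L < (m:ℝ) + 1 := by
    rw [show ((m:ℕ):ℝ) = ((⌊L⌋:ℤ):ℝ) from hmz]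
    exact Int.lt_floor_add_one L
  set t : ℝ := (2:ℝ) ^ (Int.fract L - 1) with htdef
  -- 2^(m+1) * t = x
  have hxt : (2:ℝ)^(m+1) * t = x := by
    have h1 : ((2:ℝ)^(m+1) : ℝ) = (2:ℝ) ^ (((m+1:ℕ)):ℝ) := (Real.rpow_natCast 2 (m+1)).symm
    rw [h1, htdef, ← Real.rpow_add (by norm_num : (0:ℝ) < 2)]
    have h2 : (((m+1:ℕ)):ℝ) + (Int.fract L - 1) = L := by
      have h3 := Int.floor_add_fract L
      push_cast
      push_cast at hmz
      linarith
    rw [h2, hLdef]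
    exact Real.rpow_logb (by norm_num) (by norm_num) hx0
  set n : ℕ := ⌊x⌋₊ with hndef
  have hidx : (⌊(2:ℝ)^(m+1) * t⌋).toNat = n := by
    rw [hxt, hndef, Int.floor_toNat]
  have hn2 : n ≤ 2^(m+1) := by
    have hlt : x < (2:ℝ)^(m+1) := by
      have h1 : x = (2:ℝ) ^ L := (Real.rpow_logb (by norm_num) (by norm_num) hx0).symm
      have h2 : (2:ℝ) ^ L < (2:ℝ) ^ (((m+1:ℕ)):ℝ) := by
        apply Real.rpow_lt_rpow_of_exponent_lt one_lt_two
        push_cast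
        linarith
      rw [Real.rpow_natCast] at h2
      rw [h1]; exact h2
    have := Nat.floor_lt (le_of_lt hx0) |>.mpr (by
      rw [hndef] at *
      calc x < (2:ℝ)^(m+1) := hlt
        _ = ((2^(m+1) : ℕ) : ℝ) := by push_cast; ring)
    omega
  -- approximation
  have hap := happrox (m+1) t
  rw [hidx] at hap
  have hE : |(3:ℝ)^(m+1) * f t 0 - (Wf (m+1) n).1|
      ≤ goldenRatio^(m+1) * (2*C) := le_trans (Nrm_fst _ _) hap
  have hW : 2 * (Wf (m+1) n).1 = 2 * (sT n : ℝ) + (stern n : ℝ) := (Wf_eq (m+1) n hn2).1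
  have hsum : (∑ i ∈ Finset.range (n+1), (stern i : ℝ)) = (sT n : ℝ) + (stern n : ℝ) := by
    have h1 : sT (n+1) = sT n + stern n := sT_succ n
    have h2 : (∑ i ∈ Finset.range (n+1), (stern i : ℝ)) = ((sT (n+1) : ℕ) : ℝ) := by
      rw [sT]; push_cast; ring
    rw [h2, h1]; push_cast; ring
  have hsternb : (stern n : ℝ) ≤ goldenRatio^(m+2) := (stern_gold_bound (m+1) n hn2).1
  have hzpow : (3:ℝ) ^ (⌊Real.logb 2 x⌋ + 1) = (3:ℝ)^(m+1 : ℕ) := by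
    have h1 : (⌊Real.logb 2 x⌋ : ℤ) + 1 = ((m+1 : ℕ) : ℤ) := by
      have : ((⌊L⌋ : ℤ)) = (m : ℤ) := by exact_mod_cast hmz.symm
      rw [← hLdef, this]
      push_cast; ring
    rw [h1, zpow_natCast]
  -- main bound
  have hmain : |(∑ i ∈ Finset.range (⌊x⌋₊ + 1), (stern i : ℝ)) -
      (3 : ℝ) ^ (⌊Real.logb 2 x⌋ + 1) *
        f ((2 : ℝ) ^ (Int.fract (Real.logb 2 x) - 1)) 0|
      ≤ goldenRatio^m * K := by
    rw [hzpow, ← hndef, ← hLdef, ← htdef, hsum]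
    have e1 : (sT n : ℝ) + (stern n : ℝ) - (3:ℝ)^(m+1) * f t 0
        = (stern n : ℝ)/2 - ((3:ℝ)^(m+1) * f t 0 - (Wf (m+1) n).1) := by
      linarith [hW]
    rw [e1]
    have h2 : |(stern n : ℝ)/2 - ((3:ℝ)^(m+1) * f t 0 - (Wf (m+1) n).1)|
        ≤ (stern n : ℝ)/2 + goldenRatio^(m+1) * (2*C) := by
      have := abs_sub ((stern n : ℝ)/2) ((3:ℝ)^(m+1) * f t 0 - (Wf (m+1) n).1)
      have h3 : |(stern n : ℝ)/2| = (stern n : ℝ)/2 := abs_of_nonneg (by positivity)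
      calc |(stern n : ℝ)/2 - ((3:ℝ)^(m+1) * f t 0 - (Wf (m+1) n).1)|
          ≤ |(stern n : ℝ)/2| + |(3:ℝ)^(m+1) * f t 0 - (Wf (m+1) n).1| := abs_sub _ _
        _ ≤ (stern n : ℝ)/2 + goldenRatio^(m+1) * (2*C) := by rw [h3]; linarith
    have h4 : (stern n : ℝ)/2 + goldenRatio^(m+1) * (2*C) ≤ goldenRatio^m * K := by
      have e2 : goldenRatio^(m+2) = goldenRatio^m * goldenRatio^2 := by ring
      have e3 : goldenRatio^(m+1) = goldenRatio^m * goldenRatio := by ring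
      have hgm : (0:ℝ) < goldenRatio^m := pow_pos goldenRatio_pos m
      rw [hKdef]
      calc (stern n : ℝ)/2 + goldenRatio^(m+1) * (2*C)
          ≤ goldenRatio^(m+2)/2 + goldenRatio^(m+1) * (2*C) := by linarith
        _ = goldenRatio^m * (goldenRatio^2/2 + goldenRatio*(2*C)) := by ring
        _ ≤ goldenRatio^m * (goldenRatio^2/2 + goldenRatio*(2*C) + 1) := by nlinarith
    linarith
  -- convert φ^m to x-power
  have hgoldm : goldenRatio^m ≤ x ^ (Real.logb 2 goldenRatio + ε) := by
    have h1 : goldenRatio^m = goldenRatio ^ ((m:ℕ):ℝ) := (Real.rpow_natCast _ m).symm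
    have h2 : goldenRatio ^ ((m:ℕ):ℝ) ≤ goldenRatio ^ L :=
      Real.rpow_le_rpow_of_exponent_le (le_of_lt hgold1) hmL
    have h3 : goldenRatio ^ L = x ^ (Real.logb 2 goldenRatio) := by
      have hb2 : (2:ℝ) ^ (Real.logb 2 goldenRatio) = goldenRatio :=
        Real.rpow_logb (by norm_num) (by norm_num) goldenRatio_pos
      have hx2 : (2:ℝ) ^ L = x := Real.rpow_logb (by norm_num) (by norm_num) hx0
      rw [← hx2, ← Real.rpow_mul (by norm_num : (0:ℝ) ≤ 2),
        mul_comm L (Real.logb 2 goldenRatio),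
        Real.rpow_mul (by norm_num : (0:ℝ) ≤ 2), hb2]
    have h4 : x ^ (Real.logb 2 goldenRatio) ≤ x ^ (Real.logb 2 goldenRatio + ε) :=
      Real.rpow_le_rpow_of_exponent_le hx (by linarith)
    rw [h1]
    calc goldenRatio ^ ((m:ℕ):ℝ) ≤ goldenRatio ^ L := h2
      _ = x ^ (Real.logb 2 goldenRatio) := h3
      _ ≤ x ^ (Real.logb 2 goldenRatio + ε) := h4
  calc |(∑ i ∈ Finset.range (⌊x⌋₊ + 1), (stern i : ℝ)) -
      (3 : ℝ) ^ (⌊Real.logb 2 x⌋ + 1) *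
        f ((2 : ℝ) ^ (Int.fract (Real.logb 2 x) - 1)) 0|
      ≤ goldenRatio^m * K := hmain
    _ ≤ x ^ (Real.logb 2 goldenRatio + ε) * K := by
        apply mul_le_mul_of_nonneg_right hgoldm hK0
    _ = K * x ^ (Real.logb 2 goldenRatio + ε) := by ring
end
end
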